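/- The inverse-odds function x ↦ (1 − Φ(x))/Φ(x) is convex on ℝ. -/

import Mathlib

open MeasureTheory ProbabilityTheory

/-- Standard normal density. -/
noncomputable def phi (x : ℝ) : ℝ := (Real.sqrt (2 * Real.pi))⁻¹ * Real.exp (-x ^ 2 / 2)

/-- Standard normal CDF. -/
noncomputable def Phi (x : ℝ) : ℝ := ∫ s in Set.Iic x, phi s

/-- Standard normal hazard function (inverse Mills ratio). -/
noncomputable def lam (x : ℝ) : ℝ := phi x / (1 - Phi x)

/-- Mills-ratio-type function `φ(x)/Φ(x)`. -/
noncomputable def mills (x : ℝ) : ℝ := phi x / Phi x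

lemma phi_pos (x : ℝ) : 0 < phi x := by
  unfold phi
  have : (0:ℝ) < Real.sqrt (2 * Real.pi) := Real.sqrt_pos.2 (by positivity)
  positivity

lemma continuous_phi : Continuous phi := by
  unfold phi; fun_prop

lemma integrable_phi : Integrable phi := by
  have h := (integrable_exp_neg_mul_sq (by norm_num : (0:ℝ) < 1/2)).const_mul
    ((Real.sqrt (2 * Real.pi))⁻¹)
  refine h.congr (Filter.Eventually.of_forall fun x => ?_)
  unfold phi; ring_nf

lemma integrable_neg_id_mul_phi : Integrable (fun x => -x * phi x) := by
  have h := ((integrable_mul_exp_neg_mul_sq (by norm_num : (0:ℝ) < 1/2)).const_mul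
    ((Real.sqrt (2 * Real.pi))⁻¹)).neg
  refine h.congr (Filter.Eventually.of_forall fun x => ?_)
  simp only [Pi.neg_apply]
  unfold phi; ring_nf

lemma hasDerivAt_phi (x : ℝ) : HasDerivAt phi (-x * phi x) x := by
  have h1 : HasDerivAt (fun y : ℝ => -y ^ 2 / 2) (-x) x := by
    have := ((hasDerivAt_pow 2 x).neg).div_const 2
    convert this using 1
    exacts [rfl, rfl, rfl, by ring]
  have h2 := (h1.exp).const_mul ((Real.sqrt (2 * Real.pi))⁻¹)
  have : HasDerivAt phi ((Real.sqrt (2 * Real.pi))⁻¹ * (Real.exp (-x ^ 2 / 2) * -x)) x := h2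
  convert this using 1
  unfold phi; ring

lemma tendsto_phi_atBot : Filter.Tendsto phi Filter.atBot (nhds 0) := by
  have h1 : Filter.Tendsto (fun x : ℝ => x ^ 2) Filter.atBot Filter.atTop := by
    have hneg : Filter.Tendsto (fun x : ℝ => -x) Filter.atBot Filter.atTop :=
      Filter.tendsto_neg_atBot_atTop
    have hpow : Filter.Tendsto (fun x : ℝ => x ^ 2) Filter.atTop Filter.atTop :=
      Filter.tendsto_pow_atTop (by norm_num)
    have := hpow.comp hneg
    simpa only [Function.comp_def, neg_sq] using this
  have h2 : Filter.Tendsto (fun x : ℝ => -x ^ 2 / 2) Filter.atBot Filter.atBot := by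
    apply Filter.Tendsto.atBot_div_const (by norm_num : (0:ℝ) < 2)
    exact Filter.tendsto_neg_atTop_atBot.comp h1
  have h3 := Real.tendsto_exp_atBot.comp h2
  have h4 := h3.const_mul ((Real.sqrt (2 * Real.pi))⁻¹)
  rw [mul_zero] at h4
  exact h4

lemma hasDerivAt_Phi (x : ℝ) : HasDerivAt Phi (phi x) x := by
  have key : Phi = fun y => Phi 0 + ∫ t in (0:ℝ)..y, phi t := by
    funext y
    have := intervalIntegral.integral_Iic_sub_Iic (f := phi) (μ := volume)
      (integrable_phi.integrableOn) (integrable_phi.integrableOn) (a := 0) (b := y)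
    unfold Phi
    linarith [this]
  rw [key]
  apply HasDerivAt.const_add
  exact intervalIntegral.integral_hasDerivAt_right
    integrable_phi.intervalIntegrable
    continuous_phi.stronglyMeasurable.stronglyMeasurableAtFilter
    continuous_phi.continuousAt

lemma Phi_pos (x : ℝ) : 0 < Phi x := by
  have h1 : (0:ℝ) ≤ Phi (x - 1) :=
    setIntegral_nonneg measurableSet_Iic (fun s _ => (phi_pos s).le)
  have h2 : Phi x - Phi (x - 1) = ∫ t in (x-1)..x, phi t := by
    have := intervalIntegral.integral_Iic_sub_Iic (f := phi) (μ := volume)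
      (integrable_phi.integrableOn) (integrable_phi.integrableOn) (a := x - 1) (b := x)
    unfold Phi; linarith [this]
  have h3 : (0:ℝ) < ∫ t in (x-1)..x, phi t := by
    apply intervalIntegral.intervalIntegral_pos_of_pos
      integrable_phi.intervalIntegrable (fun s => phi_pos s)
    linarith
  linarith

lemma integral_neg_mul_phi (x : ℝ) : ∫ s in Set.Iic x, (-s) * phi s = phi x := by
  have := integral_Iic_of_hasDerivAt_of_tendsto' (a := x) (f := phi)
    (f' := fun s => -s * phi s) (m := 0)
    (fun s _ => hasDerivAt_phi s) (integrable_neg_id_mul_phi.integrableOn) tendsto_phi_atBot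
  simpa using this

lemma mills_bound {x : ℝ} (hx : x < 0) : (-x) * Phi x ≤ phi x := by
  have hx' : (0:ℝ) < -x := by linarith
  have hmono : Phi x ≤ ∫ s in Set.Iic x, (-x)⁻¹ * ((-s) * phi s) := by
    unfold Phi
    apply setIntegral_mono_on integrable_phi.integrableOn
      ((integrable_neg_id_mul_phi.const_mul _).integrableOn) measurableSet_Iic
    intro s hs
    have hs' : s ≤ x := hs
    have h1 : (1:ℝ) ≤ (-x)⁻¹ * (-s) := by
      rw [← div_eq_inv_mul, le_div_iff₀ hx']
      linarith
    calc phi s = 1 * phi s := (one_mul _).symm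
      _ ≤ ((-x)⁻¹ * (-s)) * phi s := by
          apply mul_le_mul_of_nonneg_right h1 (phi_pos s).le
      _ = (-x)⁻¹ * ((-s) * phi s) := by ring
  have heq : ∫ s in Set.Iic x, (-x)⁻¹ * ((-s) * phi s) = (-x)⁻¹ * phi x := by
    rw [integral_const_mul, integral_neg_mul_phi]
  rw [heq] at hmono
  calc (-x) * Phi x ≤ (-x) * ((-x)⁻¹ * phi x) := by
        apply mul_le_mul_of_nonneg_left hmono hx'.le
    _ = phi x := by rw [← mul_assoc, mul_inv_cancel₀ hx'.ne', one_mul]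
  
lemma key_nonneg (x : ℝ) : 0 ≤ x * Phi x + 2 * phi x := by
  rcases le_or_gt 0 x with hx | hx
  · have := (Phi_pos x).le
    have := (phi_pos x).le
    nlinarith
  · have h := mills_bound hx
    nlinarith [phi_pos x]

lemma hasDerivAt_F (x : ℝ) :
    HasDerivAt (fun x => (1 - Phi x) / Phi x) (-phi x / Phi x ^ 2) x := by
  have h := ((hasDerivAt_const x (1:ℝ)).sub (hasDerivAt_Phi x)).div
    (hasDerivAt_Phi x) (Phi_pos x).ne'
  have hP := Phi_pos x
  convert h using 1
  any_goals rfl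
  simp only [Pi.sub_apply, Pi.pow_apply, Pi.neg_apply]
  rw [div_eq_div_iff (by positivity) (by positivity)]
  ring

lemma hasDerivAt_G (x : ℝ) :
    HasDerivAt (fun x => -phi x / Phi x ^ 2)
      ((x * Phi x + 2 * phi x) * phi x / Phi x ^ 3) x := by
  have h := ((hasDerivAt_phi x).neg).div
    ((hasDerivAt_Phi x).pow 2) (pow_ne_zero 2 (Phi_pos x).ne')
  convert h using 1
  any_goals rfl
  have hP := Phi_pos x
  simp only [Pi.sub_apply, Pi.pow_apply, Pi.neg_apply]
  rw [div_eq_div_iff (by positivity) (by positivity)]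
  ring

/-- the inverse-odds function `x ↦ (1 − Φ(x))/Φ(x)` is convex on `ℝ`. -/
theorem stmt_16 : ConvexOn ℝ Set.univ (fun x => (1 - Phi x) / Phi x) := by
  have hd1 : deriv (fun x => (1 - Phi x) / Phi x) = fun x => -phi x / Phi x ^ 2 :=
    funext fun x => (hasDerivAt_F x).deriv
  apply convexOn_of_deriv2_nonneg convex_univ
  · exact fun x _ => (hasDerivAt_F x).continuousAt.continuousWithinAt
  · exact fun x _ => (hasDerivAt_F x).differentiableAt.differentiableWithinAt
  · rw [hd1]
    exact fun x _ => (hasDerivAt_G x).differentiableAt.differentiableWithinAt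
  · intro x _
    have : deriv^[2] (fun x => (1 - Phi x) / Phi x) x
        = (x * Phi x + 2 * phi x) * phi x / Phi x ^ 3 := by
      show deriv (deriv (fun x => (1 - Phi x) / Phi x)) x = _
      rw [hd1, (hasDerivAt_G x).deriv]
    rw [this]
    have := Phi_pos x
    apply div_nonneg (mul_nonneg (key_nonneg x) (phi_pos x).le) (by positivity)
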